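/- Let V be a 3-dimensional oriented real inner product space, S : V → V self-adjoint, ω a unit vector, and η₂ a unit vector with ⟨ω, η₂⟩ = 0. Define C(ω)v = ω × v, Rot(ω) = Id + C(ω) + C(ω)², B(ω) = [S, C(ω)], and A(ω) = [S, Rot(ω)]. If B(ω) = μ (ω ⊙ η₂) for some real μ ≠ 0, then A(ω)³ = 0. -/

import Mathlib

open scoped RealInnerProductSpace

/-- The cross product on `ℝ³`. -/
noncomputable def cross3 (a b : EuclideanSpace ℝ (Fin 3)) : EuclideanSpace ℝ (Fin 3) :=
  WithLp.toLp 2 ![a 1 * b 2 - a 2 * b 1, a 2 * b 0 - a 0 * b 2, a 0 * b 1 - a 1 * b 0]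

/-- `Rot(ω) = Id + C(ω) + C(ω)²`, the rotation by `π/2` about `ω`. -/
noncomputable def RotQ (ω v : EuclideanSpace ℝ (Fin 3)) : EuclideanSpace ℝ (Fin 3) :=
  v + cross3 ω v + cross3 ω (cross3 ω v)

lemma cross3_add_right (a x y : EuclideanSpace ℝ (Fin 3)) :
    cross3 a (x + y) = cross3 a x + cross3 a y := by
  ext i
  fin_cases i <;> simp [cross3] <;> ring

lemma cross3_smul_right (a : EuclideanSpace ℝ (Fin 3)) (r : ℝ) (x : EuclideanSpace ℝ (Fin 3)) :
    cross3 a (r • x) = r • cross3 a x := by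
  ext i
  fin_cases i <;> simp [cross3] <;> ring

lemma cross3_self (a : EuclideanSpace ℝ (Fin 3)) : cross3 a a = 0 := by
  ext i
  fin_cases i <;> simp [cross3] <;> ring

lemma inner3 (x y : EuclideanSpace ℝ (Fin 3)) :
    ⟪x, y⟫ = x 0 * y 0 + x 1 * y 1 + x 2 * y 2 := by
  simp [PiLp.inner_apply, Fin.sum_univ_three, mul_comm]

/-- If `B(ω) = [S, C(ω)] = μ (ω ⊙ η₂)` with `μ ≠ 0`, then `A(ω)³ = 0`,
where `A(ω) = [S, Rot(ω)]`. -/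
theorem stmt_12
    (S : EuclideanSpace ℝ (Fin 3) →ₗ[ℝ] EuclideanSpace ℝ (Fin 3))
    (hsym : LinearMap.IsSymmetric S)
    (ω η₂ : EuclideanSpace ℝ (Fin 3))
    (hω : ‖ω‖ = 1) (hη₂ : ‖η₂‖ = 1) (horth : ⟪ω, η₂⟫ = 0)
    (μ : ℝ) (hμ : μ ≠ 0)
    (hB : ∀ α : EuclideanSpace ℝ (Fin 3),
      S (cross3 ω α) - cross3 ω (S α) = μ • (⟪ω, α⟫ • η₂ + ⟪η₂, α⟫ • ω))
    (A : EuclideanSpace ℝ (Fin 3) → EuclideanSpace ℝ (Fin 3))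
    (hA : ∀ α, A α = S (RotQ ω α) - RotQ ω (S α)) :
    ∀ α, A (A (A α)) = 0 := by
  set η₃ := cross3 ω η₂ with hη₃
  have hωn : ω 0 ^ 2 + ω 1 ^ 2 + ω 2 ^ 2 = 1 := by
    have := real_inner_self_eq_norm_sq ω
    rw [hω, inner3] at this; linear_combination this
  have hen : η₂ 0 ^ 2 + η₂ 1 ^ 2 + η₂ 2 ^ 2 = 1 := by
    have := real_inner_self_eq_norm_sq η₂
    rw [hη₂, inner3] at this; linear_combination this
  have hd : ω 0 * η₂ 0 + ω 1 * η₂ 1 + ω 2 * η₂ 2 = 0 := by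
    rw [inner3] at horth; linear_combination horth
  -- the key formula for A
  have hA' : ∀ α, A α =
      μ • ((⟪ω, α⟫ • η₂ + (⟪η₂, α⟫ - ⟪η₃, α⟫) • ω) + ⟪ω, α⟫ • η₃) := by
    intro α
    have h1 := hB α
    have h2 := hB (cross3 ω α)
    rw [hA, RotQ, RotQ, map_add, map_add]
    have e1 : ⟪ω, cross3 ω α⟫ = 0 := by rw [inner3]; simp [cross3]; ring
    have e2 : ⟪η₂, cross3 ω α⟫ = -⟪η₃, α⟫ := by
      rw [inner3, inner3]; simp [hη₃, cross3]; ring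
    rw [e1, e2] at h2
    have hS1 : S (cross3 ω α) = cross3 ω (S α) + μ • (⟪ω, α⟫ • η₂ + ⟪η₂, α⟫ • ω) := by
      rw [← h1]; abel
    have hS2 : S (cross3 ω (cross3 ω α)) =
        cross3 ω (S (cross3 ω α)) + μ • ((0:ℝ) • η₂ + (-⟪η₃, α⟫) • ω) := by
      rw [← h2]; abel
    rw [hS1, hS2, hS1]
    rw [cross3_add_right, cross3_smul_right, cross3_add_right, cross3_smul_right,
      cross3_smul_right, cross3_self]
    have hrw : cross3 ω η₂ = η₃ := rfl
    rw [hrw]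
    simp only [zero_smul, zero_add, smul_zero, add_zero, smul_add]
    module
  -- orthonormality facts
  have c0 : η₃ 0 = ω 1 * η₂ 2 - ω 2 * η₂ 1 := rfl
  have c1 : η₃ 1 = ω 2 * η₂ 0 - ω 0 * η₂ 2 := rfl
  have c2 : η₃ 2 = ω 0 * η₂ 1 - ω 1 * η₂ 0 := rfl
  have f1 : ⟪ω, η₃⟫ = 0 := by rw [inner3, c0, c1, c2]; ring
  have f2 : ⟪η₂, η₃⟫ = 0 := by rw [inner3, c0, c1, c2]; ring
  have f3 : ⟪η₃, η₃⟫ = 1 := by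
    rw [inner3, c0, c1, c2]
    linear_combination (η₂ 0 ^ 2 + η₂ 1 ^ 2 + η₂ 2 ^ 2) * hωn + hen - (ω 0 * η₂ 0 + ω 1 * η₂ 1 + ω 2 * η₂ 2) * hd
  have f4 : ⟪ω, ω⟫ = 1 := by rw [inner3]; linear_combination hωn
  have f5 : ⟪η₂, η₂⟫ = 1 := by rw [inner3]; linear_combination hen
  have f6 : ⟪η₂, ω⟫ = 0 := by rw [inner3]; linear_combination hd
  have f7 : ⟪η₃, ω⟫ = 0 := by rw [real_inner_comm]; exact f1
  have f8 : ⟪η₃, η₂⟫ = 0 := by rw [real_inner_comm]; exact f2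
  -- inner products with A β
  have k1 : ∀ β, ⟪ω, A β⟫ = μ * (⟪η₂, β⟫ - ⟪η₃, β⟫) := by
    intro β
    rw [hA' β]
    simp [inner_add_right, inner_smul_right, horth, f1, f4, hω]
  have k2 : ∀ β, ⟪η₂, A β⟫ = μ * ⟪ω, β⟫ := by
    intro β
    rw [hA' β]
    simp [inner_add_right, inner_smul_right, f2, f5, f6, hη₂]
  have k3 : ∀ β, ⟪η₃, A β⟫ = μ * ⟪ω, β⟫ := by
    intro β
    rw [hA' β]
    simp [inner_add_right, inner_smul_right, f3, f7, f8,
      (by rw [← real_inner_self_eq_norm_sq, f3] : ‖η₃‖ ^ 2 = 1)]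
  intro α
  rw [hA' (A (A α))]
  simp only [k1, k2, k3]
  module
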